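/- There exists a function t(λ) > 0 with lim_{λ→0⁺} t(λ) = 0 such that lim_{λ→0⁺} w̃^λ(t(λ)) = w^GF_∞, where w̃^λ(t) := w^λ(t/λ) is the time-rescaled regularised flow and w^GF_∞ = lim_{t→∞} w^GF(t). (One may take t(λ) of order −λ ln λ.) -/

import Mathlib

open Set Filter Topology
open Real NNReal

private lemma gwb_mono {K ε : ℝ} (hK : 0 < K) (hε : 0 ≤ ε) {x y : ℝ} (h : x ≤ y) :
    gronwallBound 0 K ε x ≤ gronwallBound 0 K ε y := by
  simp only [gronwallBound_of_K_ne_0 hK.ne', zero_mul, zero_add]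
  have h1 : Real.exp (K * x) ≤ Real.exp (K * y) :=
    Real.exp_le_exp.2 (mul_le_mul_of_nonneg_left h hK.le)
  have h2 : (0:ℝ) ≤ ε / K := div_nonneg hε hK.le
  nlinarith


private lemma gwb_le {K ε x : ℝ} (hK : 1 ≤ K) (hε : 0 ≤ ε) (hx : 0 ≤ x) :
    gronwallBound 0 K ε x ≤ ε * Real.exp (K * x) := by
  have hK0 : (0:ℝ) < K := lt_of_lt_of_le one_pos hK
  simp only [gronwallBound_of_K_ne_0 hK0.ne', zero_mul, zero_add]
  have h1 : ε / K ≤ ε := div_le_self hε hK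
  have h2 : (0:ℝ) ≤ ε / K := div_nonneg hε hK0.le
  have h3 : (1:ℝ) ≤ Real.exp (K * x) := Real.one_le_exp (by positivity)
  nlinarith

private lemma grad_lip {d : ℕ} (F : EuclideanSpace ℝ (Fin d) → ℝ)
    (hF : ContDiff ℝ 3 F) (r : ℝ) :
    ∃ K : ℝ≥0, 1 ≤ (K:ℝ) ∧ LipschitzOnWith K (gradient F) (Metric.closedBall 0 r) := by
  have h2 : ContDiff ℝ 2 (fderiv ℝ F) := hF.fderiv_right (by norm_num)
  have hcont : Continuous (fderiv ℝ (fderiv ℝ F)) := h2.continuous_fderiv (by norm_num)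
  obtain ⟨C, hC⟩ := (isCompact_closedBall (0 : EuclideanSpace ℝ (Fin d)) r).exists_bound_of_continuousOn (f := fderiv ℝ (fderiv ℝ F)) hcont.continuousOn
  refine ⟨⟨max C 1, le_trans zero_le_one (le_max_right _ _)⟩, le_max_right _ _, ?_⟩
  have hfd : LipschitzOnWith ⟨max C 1, le_trans zero_le_one (le_max_right _ _)⟩
      (fderiv ℝ F) (Metric.closedBall 0 r) := by
    apply (convex_closedBall _ _).lipschitzOnWith_of_nnnorm_fderiv_le
      (fun x _ => (h2.differentiable (by norm_num)).differentiableAt)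
    intro x hx
    have := hC x hx
    apply NNReal.coe_le_coe.1
    exact le_trans this (le_max_left _ _)
  intro x hx y hy
  have h := hfd hx hy
  have e1 : gradient F x = (InnerProductSpace.toDual ℝ _).symm (fderiv ℝ F x) := rfl
  have e2 : gradient F y = (InnerProductSpace.toDual ℝ _).symm (fderiv ℝ F y) := rfl
  rw [e1, e2, (InnerProductSpace.toDual ℝ _).symm.isometry.edist_eq]
  exact h

private lemma key_est {d : ℕ} {F : EuclideanSpace ℝ (Fin d) → ℝ}
    {w : ℝ → ℝ → EuclideanSpace ℝ (Fin d)} {wGF : ℝ → EuclideanSpace ℝ (Fin d)}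
    {K : ℝ≥0} {R : ℝ} (hR : 0 ≤ R)
    (hK1 : 1 ≤ (K:ℝ))
    (hlip : LipschitzOnWith K (gradient F) (Metric.closedBall 0 (R+1)))
    (hwGFbdd : ∀ t : ℝ, 0 ≤ t → ‖wGF t‖ ≤ R)
    {lam : ℝ} (hlam : 0 < lam)
    (hw0 : w lam 0 = wGF 0)
    (hwode : ∀ t : ℝ, 0 ≤ t → HasDerivAt (w lam) (-gradient F (w lam t) - lam • w lam t) t)
    (hgfode : ∀ t : ℝ, 0 ≤ t → HasDerivAt wGF (-gradient F (wGF t)) t)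
    {b : ℝ} (hb : 0 ≤ b)
    (hsmall : gronwallBound 0 (K:ℝ) (lam*(R+1)) b ≤ 1/2) :
    ∀ t ∈ Icc 0 b, ‖w lam t - wGF t‖ ≤ gronwallBound 0 (K:ℝ) (lam*(R+1)) b := by
  set ε : ℝ := lam * (R+1) with hεdef
  have hε0 : 0 ≤ ε := by positivity
  have hK0 : (0:ℝ) < K := lt_of_lt_of_le one_pos hK1
  set f : ℝ → EuclideanSpace ℝ (Fin d) := fun t => w lam t - wGF t with hfdef
  have hf0 : f 0 = 0 := by simp [hfdef, hw0]
  have hfc : ∀ t : ℝ, 0 ≤ t → ContinuousAt f t := fun t ht =>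
    ((hwode t ht).continuousAt.sub (hgfode t ht).continuousAt)
  have gron : ∀ m : ℝ, 0 ≤ m → (∀ s ∈ Icc (0:ℝ) m, ‖f s‖ ≤ 1) →
      ∀ t ∈ Icc (0:ℝ) m, ‖f t‖ ≤ gronwallBound 0 (K:ℝ) ε (t - 0) := by
    intro m hm0 hsmallf
    apply norm_le_gronwallBound_of_norm_deriv_right_le
      (fun t ht => (hfc t ht.1).continuousWithinAt)
      (fun t ht => (((hwode t ht.1).sub (hgfode t ht.1)).hasDerivWithinAt))
    case ha => simp [hf0]
    case bound =>
      intro t ht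
      have ht0 : (0:ℝ) ≤ t := ht.1
      have htm : t ∈ Icc (0:ℝ) m := ⟨ht.1, ht.2.le⟩
      have hb1 : ‖wGF t‖ ≤ R := hwGFbdd t ht0
      have hb2 : ‖w lam t‖ ≤ R + 1 := by
        calc ‖w lam t‖ = ‖f t + wGF t‖ := by simp [hfdef]
          _ ≤ ‖f t‖ + ‖wGF t‖ := norm_add_le _ _
          _ ≤ 1 + R := add_le_add (hsmallf t htm) hb1
          _ = R + 1 := by ring
      have hmem1 : w lam t ∈ Metric.closedBall (0 : EuclideanSpace ℝ (Fin d)) (R+1) := by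
        simpa [Metric.mem_closedBall, dist_zero_right] using hb2
      have hmem2 : wGF t ∈ Metric.closedBall (0 : EuclideanSpace ℝ (Fin d)) (R+1) := by
        simp only [Metric.mem_closedBall, dist_zero_right]; linarith
      have hdist : dist (gradient F (wGF t)) (gradient F (w lam t)) ≤ (K:ℝ) * dist (wGF t) (w lam t) :=
        hlip.dist_le_mul _ hmem2 _ hmem1
      have heq : -gradient F (w lam t) - lam • w lam t - -gradient F (wGF t)
          = (gradient F (wGF t) - gradient F (w lam t)) - lam • w lam t := by abel
      rw [heq]
      calc ‖(gradient F (wGF t) - gradient F (w lam t)) - lam • w lam t‖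
          ≤ ‖gradient F (wGF t) - gradient F (w lam t)‖ + ‖lam • w lam t‖ := norm_sub_le _ _
        _ ≤ (K:ℝ) * ‖f t‖ + ε := by
            apply add_le_add
            · rw [← dist_eq_norm]
              apply hdist.trans
              apply mul_le_mul_of_nonneg_left _ hK0.le
              rw [dist_eq_norm, hfdef]
              simp [norm_sub_rev]
            · rw [norm_smul, Real.norm_eq_abs, abs_of_pos hlam, hεdef]
              exact mul_le_mul_of_nonneg_left hb2 hlam.le
  set S : Set ℝ := {t | t ∈ Icc (0:ℝ) b ∧ ∀ s ∈ Icc (0:ℝ) t, ‖f s‖ ≤ 1} with hSdef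
  have hS0 : (0:ℝ) ∈ S := ⟨⟨le_refl 0, hb⟩, fun s hs => by
    have hs0 : s = 0 := le_antisymm hs.2 hs.1
    simp [hs0, hf0]⟩
  have hSbdd : BddAbove S := ⟨b, fun x hx => hx.1.2⟩
  set m := sSup S with hmdef
  have hm0 : 0 ≤ m := le_csSup hSbdd hS0
  have hmb : m ≤ b := csSup_le ⟨0, hS0⟩ fun x hx => hx.1.2
  have hlt : ∀ s : ℝ, 0 ≤ s → s < m → ‖f s‖ ≤ 1 := by
    intro s hs0 hsm
    obtain ⟨t, htS, hst⟩ := exists_lt_of_lt_csSup ⟨0, hS0⟩ hsm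
    exact htS.2 s ⟨hs0, hst.le⟩
  have hfm1 : ‖f m‖ ≤ 1 := by
    rcases eq_or_lt_of_le hm0 with h0 | h0
    · rw [← h0]; simp [hf0]
    · have hne : (𝓝[Ico (0:ℝ) m] m).NeBot := by
        rw [← mem_closure_iff_nhdsWithin_neBot, closure_Ico h0.ne]
        exact ⟨hm0, le_refl m⟩
      have ht : Tendsto (fun u => ‖f u‖) (𝓝[Ico (0:ℝ) m] m) (𝓝 ‖f m‖) :=
        ((hfc m hm0).continuousWithinAt.norm)
      exact le_of_tendsto ht (eventually_nhdsWithin_of_forall fun u hu => hlt u hu.1 hu.2)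
  have hm1 : ∀ s ∈ Icc (0:ℝ) m, ‖f s‖ ≤ 1 := by
    intro s hs
    rcases lt_or_eq_of_le hs.2 with h | h
    · exact hlt s hs.1 h
    · rw [h]; exact hfm1
  have hmeqb : m = b := by
    by_contra hne
    have hmltb : m < b := lt_of_le_of_ne hmb hne
    have hfm : ‖f m‖ ≤ 1/2 := by
      have h1 := gron m hm0 hm1 m ⟨hm0, le_refl m⟩
      rw [sub_zero] at h1
      exact h1.trans ((gwb_mono hK0 hε0 hmb).trans hsmall)
    have hev : ∀ᶠ u in 𝓝 m, ‖f u‖ < 1 :=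
      ((hfc m hm0).norm : Tendsto _ _ _).eventually (eventually_lt_nhds (by linarith))
    obtain ⟨δ, hδ0, hδ⟩ := Metric.eventually_nhds_iff.mp hev
    set t' := min (m + δ/2) b with ht'def
    have hmt' : m < t' := lt_min (by linarith) hmltb
    have ht'S : t' ∈ S := by
      refine ⟨⟨le_trans hm0 hmt'.le, min_le_right _ _⟩, ?_⟩
      intro s hs
      rcases le_or_gt s m with h | h
      · exact hm1 s ⟨hs.1, h⟩
      · refine le_of_lt (hδ ?_)
        have hsle : s ≤ m + δ/2 := le_trans hs.2 (min_le_left _ _)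
        rw [Real.dist_eq, abs_sub_lt_iff]
        constructor <;> linarith
    exact absurd (le_csSup hSbdd ht'S) (not_le.2 hmt')
  intro t ht
  have h1 := gron b hb (hmeqb ▸ hm1) t ht
  rw [sub_zero] at h1
  exact h1.trans (gwb_mono hK0 hε0 ht.2)

/-- Junction lemma: there exists `t(λ) > 0` with `t(λ) → 0` as `λ → 0⁺` such
that the time-rescaled regularised flow `w̃^λ(t(λ)) = w^λ(t(λ)/λ)` converges to
`w^GF_∞ = lim_{t→∞} w^GF(t)` as `λ → 0⁺`. -/
theorem junction_lemma
    {d : ℕ} (F : EuclideanSpace ℝ (Fin d) → ℝ)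
    (hF : ContDiff ℝ 3 F)
    (hF3 : LocallyLipschitz (iteratedFDeriv ℝ 3 F))
    (w₀ : EuclideanSpace ℝ (Fin d))
    (w : ℝ → ℝ → EuclideanSpace ℝ (Fin d))
    (hw0 : ∀ lam : ℝ, 0 < lam → w lam 0 = w₀)
    (hwode : ∀ lam : ℝ, 0 < lam → ∀ t : ℝ, 0 ≤ t →
      HasDerivAt (w lam) (-gradient F (w lam t) - lam • w lam t) t)
    (wGF : ℝ → EuclideanSpace ℝ (Fin d))
    (hgf0 : wGF 0 = w₀)
    (hgfode : ∀ t : ℝ, 0 ≤ t → HasDerivAt wGF (-gradient F (wGF t)) t)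
    (hbdd : Bornology.IsBounded (wGF '' Set.Ici (0 : ℝ)))
    (winf : EuclideanSpace ℝ (Fin d))
    (hwinf : Tendsto wGF atTop (𝓝 winf)) :
    ∃ tfun : ℝ → ℝ,
      (∀ lam : ℝ, 0 < lam → 0 < tfun lam) ∧
      Tendsto tfun (𝓝[>] (0 : ℝ)) (𝓝 0) ∧
      Tendsto (fun lam : ℝ => w lam (tfun lam / lam)) (𝓝[>] (0 : ℝ)) (𝓝 winf) := by
  obtain ⟨R0, hR0⟩ := hbdd.subset_closedBall 0
  set R : ℝ := max R0 0 with hRdef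
  have hR : 0 ≤ R := le_max_right _ _
  have hwGFbdd : ∀ t : ℝ, 0 ≤ t → ‖wGF t‖ ≤ R := by
    intro t ht
    have hmem := hR0 ⟨t, ht, rfl⟩
    rw [Metric.mem_closedBall, dist_zero_right] at hmem
    exact hmem.trans (le_max_left _ _)
  obtain ⟨K, hK1, hlip⟩ := grad_lip F hF (R + 1)
  have hK0 : (0:ℝ) < K := lt_of_lt_of_le one_pos hK1
  set sfun : ℝ → ℝ := fun lam => max 1 (-Real.log lam / (2 * (K:ℝ))) with hsfundef
  have hsfun1 : ∀ lam : ℝ, 1 ≤ sfun lam := fun lam => le_max_left _ _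
  have hevsmall : ∀ᶠ lam : ℝ in 𝓝[>] (0:ℝ), lam < Real.exp (-(2 * (K:ℝ))) :=
    Filter.Eventually.filter_mono nhdsWithin_le_nhds
      (eventually_lt_nhds (Real.exp_pos (-(2 * (K:ℝ)))))
  have hmaxeq : ∀ lam : ℝ, 0 < lam → lam < Real.exp (-(2 * (K:ℝ))) →
      sfun lam = -Real.log lam / (2 * (K:ℝ)) := by
    intro lam hlam hlt
    have hlog : Real.log lam < -(2 * (K:ℝ)) := (Real.log_lt_iff_lt_exp hlam).2 hlt
    apply max_eq_right
    rw [le_div_iff₀ (by positivity)]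
    linarith
  refine ⟨fun lam => lam * sfun lam, ?_, ?_, ?_⟩
  · intro lam hlam
    exact mul_pos hlam (lt_of_lt_of_le one_pos (hsfun1 lam))
  · have h1 : Tendsto (fun lam : ℝ => Real.log lam * lam) (𝓝[>] (0:ℝ)) (𝓝 0) := by
      have h := tendsto_log_mul_rpow_nhdsGT_zero one_pos
      simpa [Real.rpow_one] using h
    have h2 : Tendsto (fun lam : ℝ => -(Real.log lam * lam) / (2 * (K:ℝ)))
        (𝓝[>] (0:ℝ)) (𝓝 0) := by
      have h := (h1.neg).div_const (2 * (K:ℝ))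
      simpa using h
    refine Tendsto.congr' ?_ h2
    filter_upwards [self_mem_nhdsWithin, hevsmall] with lam hlam hlt
    have hlam0 : (0:ℝ) < lam := hlam
    rw [hmaxeq lam hlam0 hlt]
    field_simp
  · have hg1tendsto : Tendsto (fun lam : ℝ => (R+1) * Real.exp (Real.log lam / 2))
        (𝓝[>] (0:ℝ)) (𝓝 0) := by
      have hl : Tendsto (fun lam : ℝ => Real.log lam / 2) (𝓝[>] (0:ℝ)) atBot :=
        Real.tendsto_log_nhdsGT_zero.atBot_div_const two_pos
      have h := (Real.tendsto_exp_atBot.comp hl).const_mul (R+1)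
      simpa using h
    have hsfuntop : Tendsto sfun (𝓝[>] (0:ℝ)) atTop := by
      apply tendsto_atTop_mono (fun lam => le_max_right 1 (-Real.log lam / (2 * (K:ℝ))))
      exact (tendsto_neg_atBot_atTop.comp Real.tendsto_log_nhdsGT_zero).atTop_div_const
        (by positivity)
    have hdist2 : Tendsto (fun lam : ℝ => dist (wGF (sfun lam)) winf) (𝓝[>] (0:ℝ)) (𝓝 0) :=
      (tendsto_iff_dist_tendsto_zero.1 hwinf).comp hsfuntop
    have hkey : ∀ᶠ lam in 𝓝[>] (0:ℝ), dist (w lam (lam * sfun lam / lam)) winf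
        ≤ (R+1) * Real.exp (Real.log lam / 2) + dist (wGF (sfun lam)) winf := by
      filter_upwards [self_mem_nhdsWithin, hevsmall,
        hg1tendsto.eventually (eventually_lt_nhds (by norm_num : (0:ℝ) < 1/2))]
        with lam hlam hlt hhalf
      have hlam0 : (0:ℝ) < lam := hlam
      have hdivcancel : lam * sfun lam / lam = sfun lam := by field_simp
      rw [hdivcancel]
      have hmax := hmaxeq lam hlam0 hlt
      have hb0 : (0:ℝ) ≤ sfun lam := le_trans zero_le_one (hsfun1 lam)
      have hKb : (K:ℝ) * sfun lam = -Real.log lam / 2 := by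
        rw [hmax]; field_simp
      have hgwb : gronwallBound 0 (K:ℝ) (lam*(R+1)) (sfun lam)
          ≤ (R+1) * Real.exp (Real.log lam / 2) := by
        apply (gwb_le hK1 (by positivity) hb0).trans
        rw [hKb]
        have h5 : lam * Real.exp (-Real.log lam / 2) = Real.exp (Real.log lam / 2) := by
          have h6 := Real.exp_add (Real.log lam) (-Real.log lam / 2)
          rw [Real.exp_log hlam0] at h6
          rw [← h6]; congr 1; ring
        calc lam * (R+1) * Real.exp (-Real.log lam / 2)
            = (R+1) * (lam * Real.exp (-Real.log lam / 2)) := by ring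
          _ = (R+1) * Real.exp (Real.log lam / 2) := by rw [h5]
          _ ≤ (R+1) * Real.exp (Real.log lam / 2) := le_refl _
      have hsmall : gronwallBound 0 (K:ℝ) (lam*(R+1)) (sfun lam) ≤ 1/2 := hgwb.trans hhalf.le
      have hk := key_est hR hK1 hlip hwGFbdd hlam0 (by rw [hw0 lam hlam0, hgf0])
        (hwode lam hlam0) hgfode hb0 hsmall (sfun lam) ⟨hb0, le_refl _⟩
      calc dist (w lam (sfun lam)) winf
          ≤ dist (w lam (sfun lam)) (wGF (sfun lam)) + dist (wGF (sfun lam)) winf :=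
            dist_triangle _ _ _
        _ ≤ (R+1) * Real.exp (Real.log lam / 2) + dist (wGF (sfun lam)) winf := by
            rw [dist_eq_norm]
            exact add_le_add_left (hk.trans hgwb) _
    rw [tendsto_iff_dist_tendsto_zero]
    apply squeeze_zero' (Filter.Eventually.of_forall fun _ => dist_nonneg) hkey
    simpa using hg1tendsto.add hdist2
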